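/- arXiv:1805.10948 — 6 statements merged into one kernel-verified Lean document; each statement's English description precedes it below -/
import Mathlib

section
/- Let x = (k/l)·(π/2) where k, l are positive integers with k/l ∈ (0,1) and k − l odd. Then the sum over j from 1 to 2l−1 of (−1)^j · cos²(jx) equals −1. -/
open Real Finset

lemma cos_sum_zero (k l : ℕ) (hk : 0 < k) (hkl : k < l) :
    ∑ j ∈ Finset.range (2 * l), Real.cos (j * ((k + l : ℝ) * Real.pi / l)) = 0 := by
  have hl : (l : ℝ) ≠ 0 := Nat.cast_ne_zero.mpr (by omega)
  have hlc : (l : ℂ) ≠ 0 := Nat.cast_ne_zero.mpr (by omega)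
  have hlpos : (0 : ℝ) < l := by positivity
  set θ : ℝ := (k + l : ℝ) * Real.pi / l with hθ
  set ζ : ℂ := Complex.exp (θ * Complex.I) with hζ
  have hζne : ζ ≠ 1 := by
    rw [hζ, Ne, Complex.exp_eq_one_iff]
    rintro ⟨n, hn⟩
    have h2 : θ = n * (2 * Real.pi) := by
      have := congrArg Complex.im hn
      simpa [Complex.mul_im, Complex.mul_re] using this
    have hpi := Real.pi_pos
    have h3 : (k + l : ℝ) = 2 * n * l := by
      rw [hθ] at h2
      field_simp at h2
      nlinarith [h2]
    have hkl' : (k : ℝ) < l := by exact_mod_cast hkl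
    have hk' : (0 : ℝ) < k := by exact_mod_cast hk
    rcases le_or_gt n 0 with hn0 | hn0
    · have : (n : ℝ) ≤ 0 := by exact_mod_cast hn0
      nlinarith
    · have : (1 : ℝ) ≤ n := by exact_mod_cast hn0
      nlinarith
  have hpow : ζ ^ (2 * l) = 1 := by
    rw [hζ, ← Complex.exp_nat_mul]
    have h : ((2 * l : ℕ) : ℂ) * (θ * Complex.I) = (k + l : ℕ) * (2 * Real.pi * Complex.I) := by
      rw [hθ]
      push_cast
      field_simp
    rw [h, Complex.exp_nat_mul_two_pi_mul_I]
  have hre : ∀ j : ℕ, (ζ ^ j).re = Real.cos (j * θ) := by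
    intro j
    rw [hζ, ← Complex.exp_nat_mul]
    have h : (j : ℂ) * (θ * Complex.I) = ((j * θ : ℝ) : ℂ) * Complex.I := by push_cast; ring
    rw [h, Complex.exp_ofReal_mul_I_re]
  have hsum : ∑ j ∈ Finset.range (2 * l), ζ ^ j = 0 := by
    rw [geom_sum_eq hζne, hpow]
    simp
  have h0 := congrArg Complex.re hsum
  rw [Complex.re_sum] at h0
  simp only [hre] at h0
  simpa [hθ] using h0

theorem sum_cos_sq (k l : ℕ) (hk : 0 < k) (hkl : k < l) (hpar : Odd (k + l)) :
    ∑ j ∈ Finset.Icc 1 (2 * l - 1),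
      (-1 : ℝ) ^ j * Real.cos (j * ((k : ℝ) / l * (Real.pi / 2))) ^ 2 = -1 := by
  have hl : (l : ℝ) ≠ 0 := Nat.cast_ne_zero.mpr (by omega)
  have key : ∀ j : ℕ, (-1 : ℝ) ^ j * Real.cos (j * ((k : ℝ) / l * (Real.pi / 2))) ^ 2
      = (-1 : ℝ) ^ j / 2 + Real.cos (j * ((k + l : ℝ) * Real.pi / l)) / 2 := by
    intro j
    rw [Real.cos_sq]
    have h1 : (j : ℝ) * ((k + l : ℝ) * Real.pi / l)
        = j * Real.pi + 2 * (j * ((k : ℝ) / l * (Real.pi / 2))) := by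
      field_simp; ring
    have hc : Real.cos (j * Real.pi) = (-1 : ℝ) ^ j := by
      simpa using Real.cos_add_nat_mul_pi 0 j
    rw [h1, Real.cos_add, Real.sin_nat_mul_pi, hc]
    ring
  have hins : Finset.range (2 * l) = insert 0 (Finset.Icc 1 (2 * l - 1)) := by
    ext j; simp; omega
  have h0 : (0 : ℕ) ∉ Finset.Icc 1 (2 * l - 1) := by simp
  have hfull : ∑ j ∈ Finset.range (2 * l),
      (-1 : ℝ) ^ j * Real.cos (j * ((k : ℝ) / l * (Real.pi / 2))) ^ 2 = 0 := by
    simp only [key]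
    rw [Finset.sum_add_distrib]
    have h1 : ∑ j ∈ Finset.range (2 * l), (-1 : ℝ) ^ j / 2 = 0 := by
      rw [← Finset.sum_div, neg_one_geom_sum, if_pos (even_two_mul l)]
      simp
    have h2 : ∑ j ∈ Finset.range (2 * l), Real.cos (j * ((k + l : ℝ) * Real.pi / l)) / 2 = 0 := by
      rw [← Finset.sum_div, cos_sum_zero k l hk hkl]
      simp
    rw [h1, h2, add_zero]
  rw [hins, Finset.sum_insert h0] at hfull
  simp only [Nat.cast_zero, zero_mul, Real.cos_zero, one_pow, pow_zero, one_mul] at hfull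
  linarith
end

section
/- Let b = 2 sin((k/l)·(π/2)) with k, l positive integers of opposite parity, k/l ∈ (0,1), and let C be the 4l × 4l symmetric Toeplitz matrix with entries C(i,j) = γ(|i−j|), where γ is the symmetric solution of γ(m+1) = bγ(m) − γ(m−1), γ(0)=1. Then the rank of C is at most 2. -/
theorem toeplitz_rank_le_two (k l : ℕ) (hk : 0 < k) (hkl : k < l) (hpar : Odd (k + l))
    (b : ℝ) (hb : b = 2 * Real.sin ((k : ℝ) / l * (Real.pi / 2)))
    (γ : ℤ → ℝ)
    (hrec : ∀ m : ℤ, γ (m + 1) = b * γ m - γ (m - 1))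
    (hsym : ∀ m : ℤ, γ (-m) = γ m)
    (h0 : γ 0 = 1)
    (C : Matrix (Fin (4 * l)) (Fin (4 * l)) ℝ)
    (hC : ∀ i j : Fin (4 * l), C i j = γ ((i : ℤ) - (j : ℤ))) :
    C.rank ≤ 2 := by
  set θ : ℝ := Real.arccos (b / 2) with hθ
  have hb2 : b / 2 ∈ Set.Icc (-1 : ℝ) 1 := by
    constructor <;> rw [hb] <;> nlinarith [Real.neg_one_le_sin ((k : ℝ) / l * (Real.pi / 2)),
      Real.sin_le_one ((k : ℝ) / l * (Real.pi / 2))]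
  have hcosθ : Real.cos θ = b / 2 := Real.cos_arccos hb2.1 hb2.2
  -- γ 1 = b / 2
  have h1 : γ 1 = b / 2 := by
    have := hrec 0
    have hs := hsym 1
    simp only [zero_add, zero_sub] at this
    rw [hs, h0] at this
    linarith
  -- cos recurrence
  have hcosrec : ∀ x : ℝ, Real.cos (x + θ) = 2 * Real.cos θ * Real.cos x - Real.cos (x - θ) := by
    intro x
    rw [Real.cos_add, Real.cos_sub]; ring
  -- γ n = cos (n θ) for naturals, two-step induction
  have key : ∀ n : ℕ, γ n = Real.cos (n * θ) ∧ γ (n + 1) = Real.cos ((n + 1) * θ) := by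
    intro n
    induction n with
    | zero => simp [h0, h1, hcosθ]
    | succ m ih =>
      obtain ⟨ih1, ih2⟩ := ih
      refine ⟨by exact_mod_cast ih2, ?_⟩
      have hr := hrec ((m : ℤ) + 1)
      have : ((m : ℤ) + 1 - 1) = (m : ℤ) := by ring
      rw [this, ih1, ih2] at hr
      have hc := hcosrec (((m : ℝ) + 1) * θ)
      have e1 : ((m : ℝ) + 1) * θ + θ = ((m : ℝ) + 1 + 1) * θ := by ring
      have e2 : ((m : ℝ) + 1) * θ - θ = (m : ℝ) * θ := by ring
      rw [e1, e2] at hc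
      have e3 : (((m + 1 : ℕ) : ℤ)) + 1 = (m : ℤ) + 1 + 1 := by push_cast; ring
      have e4 : (((m + 1 : ℕ) : ℝ)) + 1 = (m : ℝ) + 1 + 1 := by push_cast; ring
      rw [e3, hr, e4, hc, hcosθ]
      ring
  have keyZ : ∀ m : ℤ, γ m = Real.cos (m * θ) := by
    intro m
    rcases le_or_gt 0 m with h | h
    · lift m to ℕ using h
      exact_mod_cast (key m).1
    · have hm : 0 ≤ -m := by omega
      have := hsym (-m)
      rw [neg_neg] at this
      rw [this]
      lift (-m) to ℕ using hm with n hn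
      have := (key n).1
      rw [this]
      have : ((m : ℝ)) = -(n : ℝ) := by
        have : (m : ℝ) = -((-m : ℤ) : ℝ) := by push_cast; ring
        rw [this, ← hn]; push_cast; ring
      rw [this]
      rw [show (-(n:ℝ)) * θ = -((n:ℝ) * θ) by ring, Real.cos_neg]
  -- C = A * A.transpose with A having two columns
  set A : Matrix (Fin (4 * l)) (Fin 2) ℝ :=
    fun i t => if t = 0 then Real.cos ((i : ℝ) * θ) else Real.sin ((i : ℝ) * θ) with hA
  have hCA : C = A * A.transpose := by
    ext i j
    rw [hC i j, keyZ]
    simp [Matrix.mul_apply, hA, Fin.sum_univ_two, Matrix.transpose_apply]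
    rw [sub_mul, Real.cos_sub]
    rw [← hA, Matrix.mul_apply, Fin.sum_univ_two, Matrix.transpose_apply, Matrix.transpose_apply]; simp [hA]
  calc C.rank = (A * A.transpose).rank := by rw [hCA]
    _ ≤ A.rank := Matrix.rank_mul_le_left A A.transpose
    _ ≤ Fintype.card (Fin 2) := Matrix.rank_le_card_width A
    _ = 2 := by simp
end

section
/- Under the same setup, the squared Frobenius norm of the 4l × 4l Toeplitz matrix C with entries γ(|i−j|) equals 8l². -/
open Finset

/-- If `F` is `l`-antiperiodic then its sum over `range (l + l)` vanishes. -/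
lemma sum_two_blocks (l : ℕ) (F : ℕ → ℝ) (hF : ∀ j, F (j + l) = - F j) :
    ∑ j ∈ range (l + l), F j = 0 := by
  rw [Finset.sum_range_add]
  have : ∑ x ∈ range l, F (l + x) = ∑ x ∈ range l, (- F x) := by
    refine Finset.sum_congr rfl fun x _ => ?_
    rw [Nat.add_comm l x, hF]
  rw [this, Finset.sum_neg_distrib]
  ring

lemma sum_four_blocks (l : ℕ) (F : ℕ → ℝ) (hF : ∀ j, F (j + l) = - F j) :
    ∑ j ∈ range (4 * l), F j = 0 := by
  have h4 : 4 * l = (l + l) + (l + l) := by ring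
  rw [h4, Finset.sum_range_add, sum_two_blocks l F hF,
    sum_two_blocks l (fun x => F ((l + l) + x)) (fun j => by
      simpa [Nat.add_assoc] using hF ((l + l) + j))]
  ring

theorem toeplitz_frobenius (k l : ℕ) (hk : 0 < k) (hkl : k < l) (hpar : Odd (k + l))
    (b : ℝ) (hb : b = 2 * Real.sin ((k : ℝ) / l * (Real.pi / 2)))
    (γ : ℤ → ℝ)
    (hrec : ∀ m : ℤ, γ (m + 1) = b * γ m - γ (m - 1))
    (hsym : ∀ m : ℤ, γ (-m) = γ m)
    (h0 : γ 0 = 1)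
    (C : Matrix (Fin (4 * l)) (Fin (4 * l)) ℝ)
    (hC : ∀ i j : Fin (4 * l), C i j = γ ((i : ℤ) - (j : ℤ))) :
    ∑ i : Fin (4 * l), ∑ j : Fin (4 * l), (C i j) ^ 2 = 8 * (l : ℝ) ^ 2 := by
  have hl : 0 < l := lt_of_le_of_lt (Nat.zero_le k) hkl
  have hl' : (l : ℝ) ≠ 0 := Nat.cast_ne_zero.mpr hl.ne'
  set θ : ℝ := Real.pi / 2 - (k : ℝ) / l * (Real.pi / 2) with hθ
  clear_value θ
  -- b = 2 cos θ
  have hbθ : b = 2 * Real.cos θ := by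
    rw [hb, hθ, Real.cos_pi_div_two_sub]
  -- γ 1 = cos θ
  have h1 : γ 1 = Real.cos θ := by
    have := hrec 0
    have hs := hsym 1
    norm_num at this
    rw [h0] at this
    -- this : γ 1 = b - γ (-1)
    rw [hs] at this
    have : 2 * γ 1 = b := by linarith
    rw [hbθ] at this
    linarith
  -- γ m = cos (m θ)
  have hγ : ∀ m : ℤ, γ m = Real.cos (m * θ) := by
    have key : ∀ m : ℤ, γ m = Real.cos (m * θ) ∧ γ (m + 1) = Real.cos ((m + 1) * θ) := by
      intro m
      induction m using Int.induction_on with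
      | zero => exact ⟨by simpa using h0, by simpa using h1⟩
      | succ n ih =>
        obtain ⟨ih1, ih2⟩ := ih
        refine ⟨by rw [ih2]; congr 1; push_cast; ring, ?_⟩
        have hr := hrec ((n : ℤ) + 1)
        rw [show ((n : ℤ) + 1 - 1) = (n : ℤ) by ring] at hr
        rw [hr, ih1, ih2, hbθ]
        have hc : ((((n : ℤ) + 1 : ℤ) : ℝ) + 1) = (n : ℝ) + 2 := by push_cast; ring
        rw [hc,
          show ((n : ℝ) + 2) * θ = (((n : ℤ) : ℝ) + 1) * θ + θ by push_cast; ring,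
          show (((n : ℤ) : ℝ)) * θ = (((n : ℤ) : ℝ) + 1) * θ - θ by ring,
          Real.cos_add, Real.cos_sub]
        ring
      | pred n ih =>
        obtain ⟨ih1, ih2⟩ := ih
        have ih1' : γ (-(n : ℤ)) = Real.cos ((-(n : ℝ)) * θ) := by
          rw [ih1]; congr 1; push_cast; ring
        have ih2' : γ (-(n : ℤ) + 1) = Real.cos ((-(n : ℝ) + 1) * θ) := by
          rw [ih2]; congr 1; push_cast; ring
        have hr := hrec (-(n : ℤ))
        rw [ih1', ih2', hbθ] at hr
        have hstep : γ (-(n : ℤ) - 1) = Real.cos ((-(n : ℝ) - 1) * θ) := by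
          have h2 : γ (-(n : ℤ) - 1)
              = 2 * Real.cos θ * Real.cos (-(n : ℝ) * θ)
                - Real.cos ((-(n : ℝ) + 1) * θ) := by linarith
          rw [h2,
            show (-(n : ℝ) + 1) * θ = (-(n : ℝ)) * θ + θ by ring,
            show (-(n : ℝ) - 1) * θ = (-(n : ℝ)) * θ - θ by ring,
            Real.cos_add, Real.cos_sub]
          ring
        constructor
        · have hc : ((-(n : ℤ) - 1 : ℤ) : ℝ) = -(n : ℝ) - 1 := by push_cast; ring
          rw [hc]; exact hstep
        · rw [show (-(n : ℤ) - 1 + 1) = -(n : ℤ) by ring]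
          have hc : ((-(n : ℤ) - 1 : ℤ) : ℝ) + 1 = -(n : ℝ) := by push_cast; ring
          rw [hc]; exact ih1'
    exact fun m => (key m).1
  -- antiperiodicity : cos (t - 2 l θ) = - cos t
  have hlk : ∃ m : ℤ, (l : ℤ) - k = 2 * m + 1 := by
    obtain ⟨t, ht⟩ := hpar
    exact ⟨(t : ℤ) - k, by omega⟩
  obtain ⟨m, hm⟩ := hlk
  have h2lθ : 2 * (l : ℝ) * θ = ((l : ℝ) - k) * Real.pi := by
    rw [hθ]; field_simp
  have hanti : ∀ t : ℝ, Real.cos (t - 2 * (l : ℝ) * θ) = - Real.cos t := by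
    intro t
    rw [h2lθ]
    have : (l : ℝ) - k = 2 * (m : ℝ) + 1 := by exact_mod_cast hm
    rw [this, show t - (2 * (m : ℝ) + 1) * Real.pi
        = (t + Real.pi) + (-(m+1) : ℤ) * (2 * Real.pi) by push_cast; ring,
      Real.cos_add_int_mul_two_pi, Real.cos_add_pi]
  -- now compute the sum
  have hCsq : ∀ i j : Fin (4 * l), (C i j) ^ 2
      = 1 / 2 + Real.cos (2 * (((i : ℤ) : ℝ) - ((j : ℤ) : ℝ)) * θ) / 2 := by
    intro i j
    rw [hC, hγ]
    push_cast
    rw [Real.cos_sq]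
    ring_nf
  -- inner sum
  have hinner : ∀ i : Fin (4 * l), ∑ j : Fin (4 * l), (C i j) ^ 2 = 2 * (l : ℝ) := by
    intro i
    have hz : ∑ j ∈ range (4 * l),
        Real.cos (2 * (((i : ℤ) : ℝ) - (j : ℕ)) * θ) = 0 := by
      apply sum_four_blocks
      intro j
      have : (2 : ℝ) * (((i : ℤ) : ℝ) - ((j : ℕ) + (l : ℕ) : ℕ)) * θ
          = 2 * (((i : ℤ) : ℝ) - (j : ℕ)) * θ - 2 * (l : ℝ) * θ := by
        push_cast; ring
      rw [this, hanti]
    calc ∑ j : Fin (4 * l), (C i j) ^ 2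
        = ∑ j : Fin (4 * l),
            (1 / 2 + Real.cos (2 * (((i : ℤ) : ℝ) - ((j : ℤ) : ℝ)) * θ) / 2) := by
          exact Finset.sum_congr rfl fun j _ => hCsq i j
      _ = ∑ j ∈ range (4 * l),
            (1 / 2 + Real.cos (2 * (((i : ℤ) : ℝ) - (j : ℕ)) * θ) / 2) := by
          rw [← Fin.sum_univ_eq_sum_range
            (fun j => (1 / 2 + Real.cos (2 * (((i : ℤ) : ℝ) - (j : ℕ)) * θ) / 2)) (4 * l)]
          exact Finset.sum_congr rfl fun j _ => by push_cast; ring_nf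
      _ = 2 * (l : ℝ) := by
          rw [Finset.sum_add_distrib, Finset.sum_const, ← Finset.sum_div, hz]
          simp
          push_cast
          ring
  rw [Finset.sum_congr rfl fun i _ => hinner i, Finset.sum_const]
  simp
  push_cast
  ring
end

section
/- Let b = 2 sin(r·π/2) with r ∈ (0,1) irrational, and let γ be the symmetric solution of γ(m+1) = bγ(m) − γ(m−1) with γ(0) = 1. Then for any M ≥ 0, the set {γ(M + m) : m ≥ 0} is dense in [−1, 1]. -/
noncomputable def gammaA (A : ℝ) : ℤ → ℝ := fun m =>
  if Even m then (-1 : ℝ) ^ (m / 2) * Real.cos (m * A)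
  else (-1 : ℝ) ^ ((m - 1) / 2) * Real.sin (m * A)

open Filter Set

theorem gamma_dense (r : ℝ) (hr : r ∈ Set.Ioo (0 : ℝ) 1) (hirr : Irrational r)
    (A : ℝ) (hA : A = r * (Real.pi / 2)) (M : ℤ) (hM : 0 ≤ M) :
    Set.Icc (-1 : ℝ) 1 ⊆
      closure {x : ℝ | ∃ m : ℤ, 0 ≤ m ∧ x = gammaA A (M + m)} := by
  set θ : AddCircle (1:ℝ) := ((r : ℝ) : AddCircle (1:ℝ)) with hθ
  set S : AddSubgroup ℝ := AddSubgroup.zmultiples r ⊔ AddSubgroup.zmultiples (1:ℝ) with hS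
  -- Step 1 : S is dense in ℝ
  have hdS : Dense (S : Set ℝ) := by
    rcases AddSubgroup.dense_or_cyclic S with h | ⟨a, ha⟩
    · exact h
    · exfalso
      have hr' : r ∈ AddSubgroup.closure {a} :=
        ha ▸ AddSubgroup.mem_sup_left (AddSubgroup.mem_zmultiples r)
      have h1 : (1:ℝ) ∈ AddSubgroup.closure {a} :=
        ha ▸ AddSubgroup.mem_sup_right (AddSubgroup.mem_zmultiples 1)
      rw [← AddSubgroup.zmultiples_eq_closure, AddSubgroup.mem_zmultiples_iff] at hr' h1
      obtain ⟨n, hn⟩ := hr'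
      obtain ⟨m, hm⟩ := h1
      rw [zsmul_eq_mul] at hn hm
      have hm0 : (m : ℝ) ≠ 0 := by
        rintro h; rw [h, zero_mul] at hm; exact one_ne_zero hm.symm
      apply hirr
      refine ⟨(n : ℚ) / (m : ℚ), ?_⟩
      have ha' : a = 1 / (m : ℝ) := by field_simp [eq_comm] at hm ⊢; linarith [hm]
      push_cast
      rw [← hn, ha']
      field_simp
  -- Step 2 : the ℤ-orbit of θ is dense in the circle
  have key : ∀ x : AddCircle (1:ℝ), x ∈ closure (Set.range fun n : ℤ => n • θ) := by
    intro x
    have hcont : Continuous (fun t : ℝ => (t : AddCircle (1:ℝ))) := continuous_quotient_mk'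
    obtain ⟨t, rfl⟩ : ∃ t : ℝ, (t : AddCircle (1:ℝ)) = x := Quotient.exists_rep x
    have h1 : (t : AddCircle (1:ℝ)) ∈ (fun s : ℝ => (s : AddCircle (1:ℝ))) '' closure (S : Set ℝ) := by
      rw [hdS.closure_eq]; exact ⟨t, trivial, rfl⟩
    have h2 := image_closure_subset_closure_image (s := (S : Set ℝ)) hcont h1
    refine closure_mono ?_ h2
    rintro _ ⟨s, hs, rfl⟩
    obtain ⟨y, hy, z, hz, rfl⟩ := AddSubgroup.mem_sup.mp hs
    rw [AddSubgroup.mem_zmultiples_iff] at hy hz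
    obtain ⟨n, rfl⟩ := hy
    obtain ⟨m, rfl⟩ := hz
    refine ⟨n, ?_⟩
    show n • θ = ((n • r + m • (1:ℝ) : ℝ) : AddCircle (1:ℝ))
    have hz0 : ((m • (1:ℝ) : ℝ) : AddCircle (1:ℝ)) = 0 := by
      rw [QuotientAddGroup.eq_zero_iff]
      exact AddSubgroup.zsmul_mem _ (AddSubgroup.mem_zmultiples 1) m
    rw [QuotientAddGroup.mk_add, hz0, add_zero, hθ, QuotientAddGroup.mk_zsmul]
  -- Step 3 : every point is in the closure of every tail of the ℕ-orbit
  have key2 : ∀ (x : AddCircle (1:ℝ)) (N : ℕ),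
      x ∈ closure ((fun n : ℕ => n • θ) '' Set.Ici N) := by
    intro x N
    have hmc : MapClusterPt x atTop (fun n : ℕ => n • θ) :=
      ((mapClusterPt_atTop_nsmul_tfae x θ).out 3 0).mp (key x)
    rw [mem_closure_iff_clusterPt]
    exact ClusterPt.mono hmc (le_principal_iff.2 (image_mem_map (Ici_mem_atTop N)))
  -- Step 4 : the continuous periodic map
  have hper : Function.Periodic (fun t : ℝ => Real.cos (2 * Real.pi * t)) 1 := by
    intro t
    simp [mul_add, Real.cos_add_two_pi]
  have hf : Continuous hper.lift := by
    unfold Function.Periodic.lift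
    exact Continuous.quotient_liftOn' (by fun_prop) _
  -- Step 5 : conclusion
  intro y hy
  set t : ℝ := Real.arccos y / (2 * Real.pi) with ht
  have hft : hper.lift ((t : ℝ) : AddCircle (1:ℝ)) = y := by
    rw [Function.Periodic.lift_coe]
    have hpi : (2 * Real.pi) ≠ 0 := by positivity
    rw [ht, mul_div_cancel₀ _ hpi]
    exact Real.cos_arccos hy.1 hy.2
  have hx := key2 ((t : ℝ) : AddCircle (1:ℝ)) M.toNat
  have hcy : y ∈ closure (hper.lift '' ((fun n : ℕ => n • θ) '' Set.Ici M.toNat)) := by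
    have := image_closure_subset_closure_image hf (Set.mem_image_of_mem _ hx)
    rwa [hft] at this
  refine closure_mono ?_ hcy
  rintro _ ⟨_, ⟨n, hn, rfl⟩, rfl⟩
  have hMn : M ≤ (n : ℤ) := Int.toNat_le.mp hn
  refine ⟨4 * (n : ℤ) - M, by omega, ?_⟩
  have h1 : (n • θ) = (((n : ℝ) * r : ℝ) : AddCircle (1:ℝ)) := by
    rw [hθ, ← QuotientAddGroup.mk_nsmul, nsmul_eq_mul]
  simp only [h1, Function.Periodic.lift_coe]
  have h2 : M + (4 * (n : ℤ) - M) = 4 * (n : ℤ) := by ring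
  rw [h2]
  have he : Even (4 * (n : ℤ)) := ⟨2 * (n : ℤ), by ring⟩
  simp only [gammaA, he, if_true]
  have h3 : (4 * (n : ℤ)) / 2 = 2 * (n : ℤ) := by omega
  rw [h3]
  have h4 : ((-1 : ℝ)) ^ (2 * (n : ℤ)) = 1 := by
    rw [zpow_mul]; norm_num
  rw [h4, one_mul, hA]
  push_cast
  ring_nf
end

section
/- For every b ∈ [0, 2], the symmetric solution γ of γ(m+1) = bγ(m) − γ(m−1) with γ(0) = 1 is a positive semidefinite function on ℤ: for all k ∈ ℕ, all t₁,…,t_k ∈ ℤ, and all a₁,…,a_k ∈ ℝ, one has Σ_{i,j} a_i γ(t_i − t_j) a_j ≥ 0. -/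
noncomputable def gammaFun (b : ℝ) : ℤ → ℝ := fun m =>
  if Even m then (-1 : ℝ) ^ (m / 2) * Real.cos (m * Real.arcsin (b / 2))
  else (-1 : ℝ) ^ ((m - 1) / 2) * Real.sin (m * Real.arcsin (b / 2))

lemma gamma_eq_cos (b : ℝ) (m : ℤ) :
    gammaFun b m = Real.cos (m * (Real.pi / 2 - Real.arcsin (b / 2))) := by
  set A := Real.arcsin (b / 2) with hA
  rcases Int.even_or_odd m with ⟨n, hn⟩ | ⟨n, hn⟩
  · have hm2 : m / 2 = n := by omega
    have h1 : (m : ℝ) * (Real.pi / 2 - A) = n * Real.pi - m * A := by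
      have : (m : ℝ) = 2 * n := by exact_mod_cast by omega
      rw [this]; ring
    rw [gammaFun, if_pos ⟨n, hn⟩, hm2, h1, Real.cos_int_mul_pi_sub]
  · have hm2 : (m - 1) / 2 = n := by omega
    have hodd : ¬ Even m := by
      rw [Int.not_even_iff_odd]; exact ⟨n, hn⟩
    have h1 : (m : ℝ) * (Real.pi / 2 - A) = n * Real.pi - (m * A - Real.pi / 2) := by
      have : (m : ℝ) = 2 * n + 1 := by exact_mod_cast hn
      rw [this]; ring
    rw [gammaFun, if_neg hodd, hm2, h1, Real.cos_int_mul_pi_sub,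
      Real.cos_sub_pi_div_two]

theorem gamma_posSemidef (b : ℝ) (hb : b ∈ Set.Icc (0 : ℝ) 2) :
    ∀ (k : ℕ) (t : Fin k → ℤ) (a : Fin k → ℝ),
      0 ≤ ∑ i : Fin k, ∑ j : Fin k, a i * gammaFun b (t i - t j) * a j := by
  intro k t a
  set θ := Real.pi / 2 - Real.arcsin (b / 2) with hθ
  have key : ∑ i : Fin k, ∑ j : Fin k, a i * gammaFun b (t i - t j) * a j
      = (∑ i : Fin k, a i * Real.cos (t i * θ)) ^ 2
        + (∑ i : Fin k, a i * Real.sin (t i * θ)) ^ 2 := by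
    rw [sq, sq, Finset.sum_mul_sum, Finset.sum_mul_sum, ← Finset.sum_add_distrib]
    refine Finset.sum_congr rfl fun i _ => ?_
    rw [← Finset.sum_add_distrib]
    refine Finset.sum_congr rfl fun j _ => ?_
    rw [gamma_eq_cos]
    have h1 : ((t i - t j : ℤ) : ℝ) * θ = t i * θ - t j * θ := by push_cast; ring
    rw [h1, Real.cos_sub]; ring
  rw [key]
  positivity
end

section
/- Let γ: ℤ → ℝ satisfy γ(m+1) = bγ(m) − γ(m−1) for some b ∈ [0,2], be symmetric with γ(0) = 1, and suppose γ is an autocovariance of a process X satisfying X_t = φX_{t−1} + Z_t with φ ∈ (0,1) where Z has autocovariance r satisfying r(m) = a·γ(m) for constant a ∈ (0,1) whenever γ(m) ≠ 0. If there exist ε > 0 and M ∈ ℕ with r(m) ≤ r(0)(1 − ε) for all m ≥ M, then a contradiction follows; i.e., γ cannot satisfy the recursion. (Key step: by density/periodicity there exists m* ≥ M with γ(m*) ≥ γ(0)(1 − ε/2), whence a = r(m*)/γ(m*) ≤ r(0)(1−ε)/(γ(0)(1−ε/2)) < r(0)/γ(0) = a, contradiction.) -/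
open Real

private lemma gamma_eq_cos_s17 (b : ℝ) (hb : b ∈ Set.Icc (0 : ℝ) 2)
    (γ : ℤ → ℝ)
    (hrec : ∀ m : ℤ, γ (m + 1) = b * γ m - γ (m - 1))
    (hsym : ∀ m : ℤ, γ (-m) = γ m)
    (h0 : γ 0 = 1) :
    ∀ m : ℤ, γ m = Real.cos (m * Real.arccos (b / 2)) := by
  set θ := Real.arccos (b / 2) with hθ
  have hb2 : b = 2 * Real.cos θ := by
    rw [hθ, Real.cos_arccos (by linarith [hb.1]) (by linarith [hb.2])]
    ring
  have h1 : γ 1 = Real.cos θ := by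
    have h := hrec 0
    have hs := hsym 1
    norm_num at h hs
    rw [hs, h0] at h
    nlinarith [h]
  have trig : ∀ x : ℝ, Real.cos (x + θ) = 2 * Real.cos θ * Real.cos x - Real.cos (x - θ) := by
    intro x
    have h := Real.cos_add_cos (x + θ) (x - θ)
    have e1 : (x + θ + (x - θ)) / 2 = x := by ring
    have e2 : (x + θ - (x - θ)) / 2 = θ := by ring
    rw [e1, e2] at h
    linarith
  set f : ℤ → ℝ := fun m => Real.cos ((m : ℝ) * θ) with hf
  have frec : ∀ m : ℤ, f (m + 1) = b * f m - f (m - 1) := by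
    intro m
    simp only [hf]
    have h := trig ((m : ℝ) * θ)
    have e1 : ((m + 1 : ℤ) : ℝ) * θ = (m : ℝ) * θ + θ := by push_cast; ring
    have e2 : ((m - 1 : ℤ) : ℝ) * θ = (m : ℝ) * θ - θ := by push_cast; ring
    rw [e1, e2, hb2]
    linarith [h]
  have key : ∀ m : ℤ, γ m = f m ∧ γ (m + 1) = f (m + 1) := by
    intro m
    induction m using Int.induction_on with
    | zero =>
      constructor
      · simp only [hf]; norm_num [h0]
      · simp only [hf]; norm_num [h1]
    | succ i ih =>
      refine ⟨ih.2, ?_⟩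
      rw [hrec ((i : ℤ) + 1), frec ((i : ℤ) + 1)]
      have e : ((i : ℤ) + 1 - 1 : ℤ) = (i : ℤ) := by ring
      rw [e, ih.1, ih.2]
    | pred i ih =>
      constructor
      · have hr := hrec (-(i : ℤ))
        have hfr := frec (-(i : ℤ))
        have hm1 : γ (-(i : ℤ) - 1) = b * γ (-(i : ℤ)) - γ (-(i : ℤ) + 1) := by
          linarith [hr]
        rw [hm1, ih.1, ih.2]
        linarith [hfr]
      · have e : (-(i : ℤ) - 1 + 1 : ℤ) = -(i : ℤ) := by ring
        rw [e]; exact ih.1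
  exact fun m => (key m).1

private lemma exists_large_close (θ : ℝ) (M : ℕ) (δ : ℝ) (hδ : 0 < δ) :
    ∃ m : ℤ, (M : ℤ) ≤ m ∧ 1 - δ ^ 2 / 2 ≤ Real.cos (m * θ) := by
  have hπ : (0:ℝ) < 2 * π := by positivity
  set S : AddSubgroup ℝ := AddSubgroup.zmultiples θ ⊔ AddSubgroup.zmultiples (2 * π) with hS
  rcases S.dense_or_cyclic with hdense | ⟨c, hc⟩
  · -- dense case
    set δ' := min (δ / (M + 1)) 1 with hδ'def
    have hδ'pos : 0 < δ' := lt_min (by positivity) one_pos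
    have hδ'le1 : δ' ≤ 1 := min_le_right _ _
    have hδ'leδ : (M + 1 : ℝ) * δ' ≤ δ := by
      have h1 : δ' ≤ δ / (M + 1) := min_le_left _ _
      have h2 : (0:ℝ) < (M:ℝ) + 1 := by positivity
      calc (M + 1 : ℝ) * δ' ≤ (M + 1 : ℝ) * (δ / (M + 1)) := by
            apply mul_le_mul_of_nonneg_left h1 (le_of_lt h2)
        _ = δ := by field_simp
    obtain ⟨g, hgS, hg⟩ := hdense.exists_mem_open isOpen_Ioo
      (Set.nonempty_Ioo.2 (show δ' / 2 < δ' by linarith))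
    obtain ⟨y, hy, z, hz, hyz⟩ := AddSubgroup.mem_sup.1 (show g ∈ AddSubgroup.zmultiples θ ⊔ AddSubgroup.zmultiples (2 * π) by rw [← hS]; exact hgS)
    obtain ⟨p, hp⟩ := AddSubgroup.mem_zmultiples_iff.1 hy
    obtain ⟨n, hn⟩ := AddSubgroup.mem_zmultiples_iff.1 hz
    have hgpos : 0 < g := lt_trans (by linarith) hg.1
    have hglt : g < δ' := hg.2
    have hgrep : g = (p : ℝ) * θ + (n : ℝ) * (2 * π) := by
      rw [← hyz, ← hp, ← hn]; push_cast [zsmul_eq_mul]; ring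
    have hp0 : p ≠ 0 := by
      rintro rfl
      simp only [Int.cast_zero, zero_mul, zero_add] at hgrep
      rcases lt_trichotomy n 0 with h | h | h
      · have hn1 : n ≤ -1 := by omega
        have hn1' : (n : ℝ) ≤ -1 := by exact_mod_cast hn1
        have := mul_le_mul_of_nonneg_right hn1' (le_of_lt hπ)
        rw [hgrep] at hgpos
        linarith
      · subst h; simp at hgrep; linarith
      · have : (1 : ℝ) ≤ (n : ℝ) := by exact_mod_cast h
        nlinarith [hgrep, hglt, hδ'le1, Real.pi_gt_three]
    -- take m = (M+1) * |p| (with sign handled via cos even)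
    have hcos_kg : 1 - δ ^ 2 / 2 ≤ Real.cos (((M:ℝ) + 1) * g) := by
      have hbound : (((M:ℝ) + 1) * g) ^ 2 ≤ δ ^ 2 := by
        have h1 : (0:ℝ) ≤ ((M:ℝ) + 1) * g := by positivity
        have h2 : ((M:ℝ) + 1) * g ≤ δ := by
          calc ((M:ℝ) + 1) * g ≤ ((M:ℝ) + 1) * δ' := by nlinarith
            _ ≤ δ := hδ'leδ
        nlinarith
      have := Real.one_sub_sq_div_two_le_cos (x := ((M:ℝ) + 1) * g)
      linarith
    rcases hp0.lt_or_gt with hneg | hpos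
    · refine ⟨((M : ℤ) + 1) * (-p), ?_, ?_⟩
      · have h1 : (1:ℤ) ≤ -p := by omega
        nlinarith [h1, Int.ofNat_nonneg M]
      · have e : ((((M : ℤ) + 1) * (-p) : ℤ) : ℝ) * θ
            = -((((M:ℝ) + 1) * g) - ((((M : ℤ) + 1) * n : ℤ) : ℝ) * (2 * π)) := by
          rw [hgrep]; push_cast; ring
        rw [e, Real.cos_neg, Real.cos_sub_int_mul_two_pi]
        exact hcos_kg
    · refine ⟨((M : ℤ) + 1) * p, ?_, ?_⟩
      · have h1 : (1:ℤ) ≤ p := hpos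
        nlinarith [h1, Int.ofNat_nonneg M]
      · have e : ((((M : ℤ) + 1) * p : ℤ) : ℝ) * θ
            = (((M:ℝ) + 1) * g) - ((((M : ℤ) + 1) * n : ℤ) : ℝ) * (2 * π) := by
          rw [hgrep]; push_cast; ring
        rw [e, Real.cos_sub_int_mul_two_pi]
        exact hcos_kg
  · -- cyclic case
    have hθS : θ ∈ S := AddSubgroup.mem_sup_left (AddSubgroup.mem_zmultiples θ)
    have h2πS : (2 * π) ∈ S := AddSubgroup.mem_sup_right (AddSubgroup.mem_zmultiples _)
    rw [hc] at hθS h2πS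
    obtain ⟨p, hp⟩ := AddSubgroup.mem_closure_singleton.1 hθS
    obtain ⟨q, hq⟩ := AddSubgroup.mem_closure_singleton.1 h2πS
    have hq0 : q ≠ 0 := by
      rintro rfl
      simp [zsmul_eq_mul] at hq
    refine ⟨(M + 1 : ℤ) * q ^ 2, ?_, ?_⟩
    · have h1 : (1:ℤ) ≤ q ^ 2 := by rcases hq0.lt_or_gt with h|h <;> nlinarith
      nlinarith [h1]
    · have : (((M + 1 : ℤ) * q ^ 2 : ℤ) : ℝ) * θ = (((M + 1 : ℤ) * p * q : ℤ) : ℝ) * (2 * π) := by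
        rw [← hp, ← hq]
        push_cast [zsmul_eq_mul]; ring
      rw [this, Real.cos_int_mul_two_pi]
      nlinarith [sq_nonneg δ]

theorem no_recursion_under_decay (b : ℝ) (hb : b ∈ Set.Icc (0 : ℝ) 2)
    (γ r : ℤ → ℝ)
    (hrec : ∀ m : ℤ, γ (m + 1) = b * γ m - γ (m - 1))
    (hsym : ∀ m : ℤ, γ (-m) = γ m)
    (h0 : γ 0 = 1)
    (a : ℝ) (ha : a ∈ Set.Ioo (0 : ℝ) 1)
    (hratio : ∀ m : ℤ, γ m ≠ 0 → r m = a * γ m)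
    (ε : ℝ) (hε : 0 < ε) (M : ℕ)
    (hdecay : ∀ m : ℤ, (M : ℤ) ≤ m → r m ≤ r 0 * (1 - ε)) :
    False := by
  obtain ⟨ha0, ha1⟩ := ha
  have hr0 : r 0 = a := by
    have := hratio 0 (by rw [h0]; norm_num)
    rw [h0] at this; linarith
  -- WLOG ε ≤ 1/2
  set ε' : ℝ := min ε (1/2) with hε'def
  have hε'pos : 0 < ε' := lt_min hε (by norm_num)
  have hε'le : ε' ≤ 1/2 := min_le_right _ _
  have hdecay' : ∀ m : ℤ, (M : ℤ) ≤ m → r m ≤ r 0 * (1 - ε') := by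
    intro m hm
    have h1 := hdecay m hm
    have h2 : ε' ≤ ε := min_le_left _ _
    have : r 0 * (1 - ε) ≤ r 0 * (1 - ε') := by
      rw [hr0]; nlinarith
    linarith
  have hγcos := gamma_eq_cos_s17 b hb γ hrec hsym h0
  have hδ : (0:ℝ) < Real.sqrt ε' := Real.sqrt_pos.2 hε'pos
  obtain ⟨m, hmM, hmcos⟩ := exists_large_close (Real.arccos (b / 2)) M (Real.sqrt ε') hδ
  rw [Real.sq_sqrt (le_of_lt hε'pos)] at hmcos
  have hγm : γ m = Real.cos (m * Real.arccos (b / 2)) := hγcos m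
  have hγge : 1 - ε' / 2 ≤ γ m := by rw [hγm]; linarith
  have hγpos : 0 < γ m := by linarith
  have hrm : r m = a * γ m := hratio m (ne_of_gt hγpos)
  have hrd := hdecay' m hmM
  rw [hrm, hr0] at hrd
  -- a * γ m ≥ a * (1 - ε'/2) > a * (1 - ε')
  nlinarith [hγge, hrd, hε'pos, ha0]
end
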